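/- Let a be a positive integer and let n = ⌊√a⌋. If t, t+1, …, t+k are all in T_s(a), then t+1+n, t+2+n, …, t+k+n are all in T_{s+1}(a). -/
import Mathlib


def memT (s a t : ℕ) : Prop := 0 < t ∧ s^2 * a < t^2 ∧ t^2 < s^2 * (a+1)

theorem stmt_6 (a n s t k : ℕ) (ha : 0 < a) (hn : n = Nat.sqrt a)
    (h : ∀ i : ℕ, i ≤ k → memT s a (t + i)) :
    ∀ i : ℕ, 1 ≤ i → i ≤ k → memT (s + 1) a (t + i + n) := by
  intro i hi1 hik
  obtain ⟨j, rfl⟩ := Nat.exists_eq_add_of_le hi1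
  obtain ⟨ht1, h1, h2⟩ := h j (by omega)
  obtain ⟨ht2, h3, h4⟩ := h (1 + j) hik
  have hn2 : n ^ 2 ≤ a := by rw [hn]; exact Nat.sqrt_le' a
  have hn3 : a < (n + 1) ^ 2 := by rw [hn]; exact Nat.lt_succ_sqrt' a
  have hu1 : t + (1 + j) = (t + j) + 1 := by ring
  refine ⟨by omega, ?_, ?_⟩
  · have key1 : s * a < (t + j) * (n + 1) := by
      have hsq : (s * a) ^ 2 < ((t + j) * (n + 1)) ^ 2 := by nlinarith
      exact lt_of_pow_lt_pow_left₀ 2 (by positivity) hsq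
    nlinarith [key1, h1, hn3]
  · have key2 : ((t + j) + 1) * n < s * (a + 1) := by
      have hsq : (((t + j) + 1) * n) ^ 2 < (s * (a + 1)) ^ 2 := by
        rw [hu1] at h4; nlinarith
      exact lt_of_pow_lt_pow_left₀ 2 (by positivity) hsq
    rw [hu1] at h4 ⊢
    nlinarith [key2, h4, hn2]
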